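/- The angular-momentum-related function K_J3 = (x·py − y·px)² + 2k2(y/x)² + 2k3(x/y)² Poisson-commutes with H_μ = (1/(1−λr²))·[ (px²+py²+pz²)/2 + k1 r² + k2/x² + k3/y² + k4/z² ], where r² = x²+y²+z². -/

import Mathlib

noncomputable section

/-- Phase space ℝ⁶ with coordinates (x,y,z,px,py,pz). -/
abbrev Pt := Fin 6 → ℝ

/-- Standard basis vector. -/
def e (j : Fin 6) : Pt := Pi.single j 1

/-- Canonical Poisson bracket on ℝ⁶:
{F,G} = Σᵢ (∂F/∂qᵢ ∂G/∂pᵢ − ∂F/∂pᵢ ∂G/∂qᵢ). -/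
def pb (F G : Pt → ℝ) (q : Pt) : ℝ :=
    (fderiv ℝ F q (e 0)) * (fderiv ℝ G q (e 3)) - (fderiv ℝ F q (e 3)) * (fderiv ℝ G q (e 0))
  + (fderiv ℝ F q (e 1)) * (fderiv ℝ G q (e 4)) - (fderiv ℝ F q (e 4)) * (fderiv ℝ G q (e 1))
  + (fderiv ℝ F q (e 2)) * (fderiv ℝ G q (e 5)) - (fderiv ℝ F q (e 5)) * (fderiv ℝ G q (e 2))

/-- H_μ = (1/(1−λr²))·[(px²+py²+pz²)/2 + k1 r² + k2/x² + k3/y² + k4/z²]. -/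
def Hmu (lam k1 k2 k3 k4 : ℝ) (q : Pt) : ℝ :=
  (1 / (1 - lam * (q 0 ^ 2 + q 1 ^ 2 + q 2 ^ 2))) *
    ((q 3 ^ 2 + q 4 ^ 2 + q 5 ^ 2) / 2 + k1 * (q 0 ^ 2 + q 1 ^ 2 + q 2 ^ 2)
      + k2 / q 0 ^ 2 + k3 / q 1 ^ 2 + k4 / q 2 ^ 2)

/-- K_J3 = (x py − y px)² + 2k2 (y/x)² + 2k3 (x/y)². -/
def KJ3 (k2 k3 : ℝ) (q : Pt) : ℝ :=
  (q 0 * q 4 - q 1 * q 3) ^ 2 + 2 * k2 * (q 1 / q 0) ^ 2 + 2 * k3 * (q 0 / q 1) ^ 2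

lemma HasFDerivAt.inv' {E : Type*} [NormedAddCommGroup E] [NormedSpace ℝ E]
    {f : E → ℝ} {f' : E →L[ℝ] ℝ} {q : E} (h : HasFDerivAt f f' q) (hne : f q ≠ 0) :
    HasFDerivAt (fun x => (f x)⁻¹) ((-(f q ^ 2)⁻¹) • f') q :=
  (hasDerivAt_inv hne).comp_hasFDerivAt q h

lemma HasFDerivAt.div' {E : Type*} [NormedAddCommGroup E] [NormedSpace ℝ E]
    {c d : E → ℝ} {c' d' : E →L[ℝ] ℝ} {q : E} (hc : HasFDerivAt c c' q)
    (hd : HasFDerivAt d d' q) (hne : d q ≠ 0) :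
    HasFDerivAt (fun x => c x / d x)
      (c q • ((-(d q ^ 2)⁻¹) • d') + (d q)⁻¹ • c') q := by
  simpa [div_eq_mul_inv, Pi.mul_def] using hc.mul (hd.inv' hne)

lemma HasFDerivAt.sq {E : Type*} [NormedAddCommGroup E] [NormedSpace ℝ E]
    {f : E → ℝ} {f' : E →L[ℝ] ℝ} {q : E} (h : HasFDerivAt f f' q) :
    HasFDerivAt (fun x => f x ^ 2) ((2 * f q) • f') q := by
  simpa [pow_two, two_mul, add_smul, Pi.mul_def] using h.mul h

set_option maxHeartbeats 3000000 in
theorem stmt5 (lam k1 k2 k3 k4 : ℝ) :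
    ∀ q : Pt, q 0 ≠ 0 → q 1 ≠ 0 → q 2 ≠ 0 →
      1 - lam * (q 0 ^ 2 + q 1 ^ 2 + q 2 ^ 2) > 0 →
      pb (KJ3 k2 k3) (Hmu lam k1 k2 k3 k4) q = 0 := by
  intro q h0 h1 h2 hden
  have hdne : 1 - lam * (q 0 ^ 2 + q 1 ^ 2 + q 2 ^ 2) ≠ 0 := ne_of_gt hden
  have p0 := hasFDerivAt_apply (𝕜 := ℝ) (0 : Fin 6) q
  have p1 := hasFDerivAt_apply (𝕜 := ℝ) (1 : Fin 6) q
  have p2 := hasFDerivAt_apply (𝕜 := ℝ) (2 : Fin 6) q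
  have p3 := hasFDerivAt_apply (𝕜 := ℝ) (3 : Fin 6) q
  have p4 := hasFDerivAt_apply (𝕜 := ℝ) (4 : Fin 6) q
  have p5 := hasFDerivAt_apply (𝕜 := ℝ) (5 : Fin 6) q
  have hK : HasFDerivAt (𝕜 := ℝ) (KJ3 k2 k3) _ q :=
    ((((p0.mul p4).sub (p1.mul p3)).sq).add
        (((p1.div' p0 h0).sq).const_mul (2*k2))).add
      (((p0.div' p1 h1).sq).const_mul (2*k3))
  have hD : HasFDerivAt (𝕜 := ℝ)
      (fun p : Pt => 1 - lam * (p 0 ^ 2 + p 1 ^ 2 + p 2 ^ 2)) _ q :=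
    (hasFDerivAt_const (1:ℝ) q).sub ((((p0.sq).add (p1.sq)).add (p2.sq)).const_mul lam)
  have hS : HasFDerivAt (𝕜 := ℝ)
      (fun p : Pt => (p 3 ^ 2 + p 4 ^ 2 + p 5 ^ 2) / 2
        + k1 * (p 0 ^ 2 + p 1 ^ 2 + p 2 ^ 2)
        + k2 / p 0 ^ 2 + k3 / p 1 ^ 2 + k4 / p 2 ^ 2) _ q :=
    ((((((((p3.sq).add (p4.sq)).add (p5.sq)).div' (hasFDerivAt_const (2:ℝ) q) two_ne_zero).add
        ((((p0.sq).add (p1.sq)).add (p2.sq)).const_mul k1)).add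
      ((hasFDerivAt_const k2 q).div' (p0.sq) (pow_ne_zero 2 h0))).add
        ((hasFDerivAt_const k3 q).div' (p1.sq) (pow_ne_zero 2 h1))).add
      ((hasFDerivAt_const k4 q).div' (p2.sq) (pow_ne_zero 2 h2)))
  have hH : HasFDerivAt (𝕜 := ℝ) (Hmu lam k1 k2 k3 k4) _ q :=
    ((hasFDerivAt_const (1:ℝ) q).div' hD hdne).mul hS
  have key2 : pb (KJ3 k2 k3)
      (fun p : Pt => 1 - lam * (p 0 ^ 2 + p 1 ^ 2 + p 2 ^ 2)) q = 0 := by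
    rw [pb, hK.fderiv, hD.fderiv]
    simp (config := { decide := true }) only [ContinuousLinearMap.add_apply,
      ContinuousLinearMap.smul_apply, ContinuousLinearMap.sub_apply,
      ContinuousLinearMap.proj_apply, ContinuousLinearMap.zero_apply,
      ContinuousLinearMap.coe_smul', ContinuousLinearMap.neg_apply, ContinuousLinearMap.one_apply, Pi.smul_apply, smul_eq_mul, e, Pi.single_apply,
      if_true, if_false, mul_zero, zero_mul, mul_one, one_mul, add_zero, zero_add,
      sub_zero, zero_sub, neg_zero, neg_neg]
    ring
  have key1 : pb (KJ3 k2 k3)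
      (fun p : Pt => (p 3 ^ 2 + p 4 ^ 2 + p 5 ^ 2) / 2
        + k1 * (p 0 ^ 2 + p 1 ^ 2 + p 2 ^ 2)
        + k2 / p 0 ^ 2 + k3 / p 1 ^ 2 + k4 / p 2 ^ 2) q = 0 := by
    rw [pb, hK.fderiv, hS.fderiv]
    simp (config := { decide := true }) only [Pi.mul_apply, Pi.sub_apply, ContinuousLinearMap.add_apply,
      ContinuousLinearMap.smul_apply, ContinuousLinearMap.sub_apply,
      ContinuousLinearMap.proj_apply, ContinuousLinearMap.zero_apply,
      ContinuousLinearMap.coe_smul', ContinuousLinearMap.neg_apply, ContinuousLinearMap.one_apply, Pi.smul_apply, smul_eq_mul, e, Pi.single_apply,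
      if_true, if_false, mul_zero, zero_mul, mul_one, one_mul, add_zero, zero_add,
      sub_zero, zero_sub, neg_zero, neg_neg]
    field_simp
    ring
  have split : pb (KJ3 k2 k3) (Hmu lam k1 k2 k3 k4) q =
      (1 / (1 - lam * (q 0 ^ 2 + q 1 ^ 2 + q 2 ^ 2))) *
        pb (KJ3 k2 k3)
          (fun p : Pt => (p 3 ^ 2 + p 4 ^ 2 + p 5 ^ 2) / 2
            + k1 * (p 0 ^ 2 + p 1 ^ 2 + p 2 ^ 2)
            + k2 / p 0 ^ 2 + k3 / p 1 ^ 2 + k4 / p 2 ^ 2) q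
      + (((q 3 ^ 2 + q 4 ^ 2 + q 5 ^ 2) / 2
            + k1 * (q 0 ^ 2 + q 1 ^ 2 + q 2 ^ 2)
            + k2 / q 0 ^ 2 + k3 / q 1 ^ 2 + k4 / q 2 ^ 2) *
          (-((1 - lam * (q 0 ^ 2 + q 1 ^ 2 + q 2 ^ 2)) ^ 2)⁻¹)) *
        pb (KJ3 k2 k3)
          (fun p : Pt => 1 - lam * (p 0 ^ 2 + p 1 ^ 2 + p 2 ^ 2)) q := by
    rw [pb, pb, pb, hK.fderiv, hH.fderiv, hS.fderiv, hD.fderiv]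
    simp (config := { decide := true }) only [ContinuousLinearMap.add_apply,
      ContinuousLinearMap.smul_apply, ContinuousLinearMap.sub_apply,
      ContinuousLinearMap.proj_apply, ContinuousLinearMap.zero_apply,
      ContinuousLinearMap.coe_smul', ContinuousLinearMap.neg_apply, ContinuousLinearMap.one_apply, Pi.smul_apply, smul_eq_mul, e, Pi.single_apply,
      if_true, if_false, mul_zero, zero_mul, mul_one, one_mul, add_zero, zero_add,
      sub_zero, zero_sub, neg_zero, neg_neg]
    ring
  rw [split, key1, key2]
  ring
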